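/- Let Φ be an m × n matrix with unit ℓ2-norm columns whose restricted isometry constant satisfies δ_{2k} < 1/√2. Then every k-sparse vector x ∈ ℝⁿ is the unique minimizer of ‖z‖_1 subject to Φz = Φx. -/

import Mathlib

/-- x is k-sparse: at most k nonzero entries. -/
def IsSparse {n : ℕ} (k : ℕ) (x : Fin n → ℝ) : Prop :=
  ∃ s : Finset (Fin n), s.card ≤ k ∧ ∀ j ∉ s, x j = 0

/-- The restricted isometry constant of order k. -/
noncomputable def ric {m n : ℕ} (Φ : Matrix (Fin m) (Fin n) ℝ) (k : ℕ) : ℝ :=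
  sInf {δ : ℝ | 0 ≤ δ ∧ ∀ x : Fin n → ℝ, IsSparse k x →
    (1 - δ) * (∑ j, x j ^ 2) ≤ (∑ i, (∑ j, Φ i j * x j) ^ 2) ∧
    (∑ i, (∑ j, Φ i j * x j) ^ 2) ≤ (1 + δ) * (∑ j, x j ^ 2)}

open Finset

/-- Existence of a set of k indices carrying the k largest absolute values. -/
lemma exists_topk {n : ℕ} (h : Fin n → ℝ) (k : ℕ) (hk : k ≤ n) :
    ∃ T : Finset (Fin n), T.card = k ∧ (∀ i ∈ T, ∀ j ∉ T, |h j| ≤ |h i|) ∧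
      (∀ s : Finset (Fin n), s.card ≤ k → ∑ j ∈ s, |h j| ≤ ∑ j ∈ T, |h j|) := by
  have hne : (Finset.powersetCard k (univ : Finset (Fin n))).Nonempty := by
    rw [Finset.powersetCard_nonempty]
    simpa using hk
  obtain ⟨T, hT, hmax⟩ := Finset.exists_max_image _ (fun T => ∑ j ∈ T, |h j|) hne
  rw [Finset.mem_powersetCard] at hT
  refine ⟨T, hT.2, ?_, ?_⟩
  · intro i hi j hj
    have hjT : j ∉ T.erase i := fun hc => hj (Finset.erase_subset _ _ hc)
    have hT' : insert j (T.erase i) ∈ Finset.powersetCard k univ := by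
      rw [Finset.mem_powersetCard]
      refine ⟨subset_univ _, ?_⟩
      rw [Finset.card_insert_of_notMem hjT, Finset.card_erase_of_mem hi, hT.2]
      have : 1 ≤ k := by
        rw [← hT.2]; exact Finset.card_pos.mpr ⟨i, hi⟩
      omega
    have := hmax _ hT'
    rw [Finset.sum_insert hjT] at this
    have herase : |h i| + ∑ l ∈ T.erase i, |h l| = ∑ l ∈ T, |h l| :=
      Finset.add_sum_erase T (fun l => |h l|) hi
    linarith
  · intro s hs
    obtain ⟨s', hss', hs'u, hs'c⟩ := Finset.exists_subsuperset_card_eq (subset_univ s) hs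
      (by simpa using hk)
    have h1 : ∑ j ∈ s, |h j| ≤ ∑ j ∈ s', |h j| :=
      Finset.sum_le_sum_of_subset_of_nonneg hss' (fun _ _ _ => abs_nonneg _)
    have h2 := hmax s' (Finset.mem_powersetCard.mpr ⟨hs'u, hs'c⟩)
    linarith

/-- Extract an honest RIP constant below `c` from `ric Φ k < c`. -/
lemma ric_lt_elim {m n : ℕ} (Φ : Matrix (Fin m) (Fin n) ℝ) (k : ℕ) {c : ℝ}
    (hc : ric Φ k < c) :
    ∃ δ : ℝ, 0 ≤ δ ∧ δ < c ∧ ∀ x : Fin n → ℝ, IsSparse k x →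
      (1 - δ) * (∑ j, x j ^ 2) ≤ (∑ i, (∑ j, Φ i j * x j) ^ 2) ∧
      (∑ i, (∑ j, Φ i j * x j) ^ 2) ≤ (1 + δ) * (∑ j, x j ^ 2) := by
  set C : ℝ := ∑ i, ∑ j, Φ i j ^ 2 with hC
  have hC0 : 0 ≤ C := Finset.sum_nonneg fun i _ => Finset.sum_nonneg fun j _ => sq_nonneg _
  have hmem : (1 + C) ∈ {δ : ℝ | 0 ≤ δ ∧ ∀ x : Fin n → ℝ, IsSparse k x →
      (1 - δ) * (∑ j, x j ^ 2) ≤ (∑ i, (∑ j, Φ i j * x j) ^ 2) ∧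
      (∑ i, (∑ j, Φ i j * x j) ^ 2) ≤ (1 + δ) * (∑ j, x j ^ 2)} := by
    refine ⟨by linarith, fun x _ => ⟨?_, ?_⟩⟩
    · have h1 : (1 - (1 + C)) * (∑ j, x j ^ 2) ≤ 0 := by
        have := Finset.sum_nonneg (fun j (_ : j ∈ (univ : Finset (Fin n))) => sq_nonneg (x j))
        nlinarith
      exact le_trans h1 (Finset.sum_nonneg fun i _ => sq_nonneg _)
    · have hCS : ∀ i, (∑ j, Φ i j * x j) ^ 2 ≤ (∑ j, Φ i j ^ 2) * (∑ j, x j ^ 2) :=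
        fun i => Finset.sum_mul_sq_le_sq_mul_sq _ _ _
      calc (∑ i, (∑ j, Φ i j * x j) ^ 2)
          ≤ ∑ i, (∑ j, Φ i j ^ 2) * (∑ j, x j ^ 2) := Finset.sum_le_sum fun i _ => hCS i
        _ = C * (∑ j, x j ^ 2) := by rw [hC, Finset.sum_mul]
        _ ≤ (1 + (1 + C)) * (∑ j, x j ^ 2) := by
            have := Finset.sum_nonneg (fun j (_ : j ∈ (univ : Finset (Fin n))) => sq_nonneg (x j))
            nlinarith
  obtain ⟨δ, hδmem, hδlt⟩ := exists_lt_of_csInf_lt ⟨_, hmem⟩ hc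
  exact ⟨δ, hδmem.1, hδlt, hδmem.2⟩


/-- If at most one entry is "fractional" (nonzero with |v j| < α), the support has ≤ k
elements. -/
lemma supp_card_le {n : ℕ} (k : ℕ) (α : ℝ) (v : Fin n → ℝ)
    (hfrac : (univ.filter (fun j => v j ≠ 0 ∧ |v j| < α)).card ≤ 1)
    (hinf : ∀ j, |v j| ≤ α) (h1 : (∑ j, |v j|) ≤ k * α) :
    ((univ.filter (fun j : Fin n => v j ≠ 0)).card ≤ k) := by
  rcases le_or_gt α 0 with hα | hα
  · have : ∀ j, v j = 0 := fun j => abs_eq_zero.mp (le_antisymm (le_trans (hinf j) hα) (abs_nonneg _))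
    have : (univ.filter (fun j : Fin n => v j ≠ 0)) = ∅ :=
      filter_eq_empty_iff.mpr (fun j _ => by simp [this j])
    simp [this]
  · set frac := univ.filter (fun j => v j ≠ 0 ∧ |v j| < α) with hfracdef
    set full := univ.filter (fun j : Fin n => |v j| = α) with hfulldef
    have hsub : univ.filter (fun j : Fin n => v j ≠ 0) ⊆ full ∪ frac := by
      intro l hl
      simp only [mem_filter, mem_univ, true_and] at hl
      rcases lt_or_eq_of_le (hinf l) with h | h
      · exact mem_union_right _ (by simp [hfracdef, hl, h])
      · exact mem_union_left _ (by simp [hfulldef, h])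
    have hfullsum : ∑ j ∈ full, |v j| = full.card * α := by
      rw [Finset.sum_congr rfl (fun j hj => (mem_filter.mp hj).2)]
      simp [mul_comm, hfulldef]
    have hfullk : (full.card : ℝ) * α ≤ k * α := by
      rw [← hfullsum]
      exact le_trans (Finset.sum_le_sum_of_subset_of_nonneg (subset_univ _)
        (fun _ _ _ => abs_nonneg _)) h1
    have hcard := le_trans (Finset.card_le_card hsub) (Finset.card_union_le _ _)
    rcases Finset.eq_empty_or_nonempty frac with he | ⟨j₀, hj₀⟩
    · have : full.card ≤ k := by
        exact_mod_cast (mul_le_mul_iff_of_pos_right hα).mp hfullk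
      simpa [he] using le_trans hcard (by simpa [he] using this)
    · -- frac nonempty: full.card < k strictly
      simp only [hfracdef, mem_filter, mem_univ, true_and] at hj₀
      have hj0full : j₀ ∉ full := by
        simp [hfulldef, ne_of_lt hj₀.2]
      have hsum2 : ∑ j ∈ insert j₀ full, |v j| ≤ k * α :=
        le_trans (Finset.sum_le_sum_of_subset_of_nonneg (subset_univ _)
          (fun _ _ _ => abs_nonneg _)) h1
      rw [Finset.sum_insert hj0full, hfullsum] at hsum2
      have hpos : 0 < |v j₀| := abs_pos.mpr hj₀.1
      have hlt : (full.card : ℝ) * α < k * α := by linarith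
      have hfk : full.card < k := by
        exact_mod_cast (mul_lt_mul_iff_of_pos_right hα).mp hlt
      have : full.card + frac.card ≤ k := by omega
      exact le_trans hcard this

/-- Cai–Zhang sparse decomposition of a polytope. -/
lemma polytope_decomp {n : ℕ} (k : ℕ) (α : ℝ) :
    ∀ v : Fin n → ℝ, (∀ j, |v j| ≤ α) → (∑ j, |v j|) ≤ k * α →
    v ∈ convexHull ℝ {u : Fin n → ℝ |
      (∀ j, u j ≠ 0 → v j ≠ 0) ∧ ((univ.filter (fun j => u j ≠ 0)).card ≤ k) ∧
      (∀ j, |u j| ≤ α) ∧ (∑ j, |u j|) ≤ k * α} := by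
  have main : ∀ N : ℕ, ∀ v : Fin n → ℝ,
      (univ.filter (fun j => v j ≠ 0 ∧ |v j| < α)).card ≤ N →
      (∀ j, |v j| ≤ α) → (∑ j, |v j|) ≤ k * α →
      v ∈ convexHull ℝ {u : Fin n → ℝ |
        (∀ j, u j ≠ 0 → v j ≠ 0) ∧ ((univ.filter (fun j => u j ≠ 0)).card ≤ k) ∧
        (∀ j, |u j| ≤ α) ∧ (∑ j, |u j|) ≤ k * α} := by
    intro N
    induction N with
    | zero =>
      intro v hN hinf h1
      exact subset_convexHull ℝ _
        ⟨fun j h => h, supp_card_le k α v (le_trans hN (by norm_num)) hinf h1, hinf, h1⟩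
    | succ N ih =>
      intro v hN hinf h1
      by_cases hle : (univ.filter (fun j => v j ≠ 0 ∧ |v j| < α)).card ≤ N
      · exact ih v hle hinf h1
      rcases Nat.lt_or_ge (univ.filter (fun j => v j ≠ 0 ∧ |v j| < α)).card 2 with hlt2 | hge2
      · exact subset_convexHull ℝ _
          ⟨fun j h => h, supp_card_le k α v (by omega) hinf h1, hinf, h1⟩
      · -- exchange step: two fractional entries i ≠ j
        obtain ⟨i, hi, j, hj, hij⟩ := Finset.one_lt_card.mp hge2
        simp only [mem_filter, mem_univ, true_and] at hi hj
        obtain ⟨hvi, hvia⟩ := hi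
        obtain ⟨hvj, hvja⟩ := hj
        set σi : ℝ := if 0 < v i then 1 else -1 with hσidef
        set σj : ℝ := if 0 < v j then 1 else -1 with hσjdef
        have hσi : v i = σi * |v i| := by
          rcases hvi.lt_or_gt with h | h
          · simp [hσidef, not_lt.mpr h.le, abs_of_neg h]
          · simp [hσidef, h, abs_of_pos h]
        have hσj : v j = σj * |v j| := by
          rcases hvj.lt_or_gt with h | h
          · simp [hσjdef, not_lt.mpr h.le, abs_of_neg h]
          · simp [hσjdef, h, abs_of_pos h]
        have hσiabs : |σi| = 1 := by rcases le_or_gt σi 0 with h|h <;> simp [hσidef] <;> split <;> norm_num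
        have hσjabs : |σj| = 1 := by rcases le_or_gt σj 0 with h|h <;> simp [hσjdef] <;> split <;> norm_num
        set d : Fin n → ℝ := fun l => if l = i then σi else if l = j then -σj else 0 with hd
        set wv : ℝ → Fin n → ℝ := fun t l => v l + t * d l with hwv
        set tp : ℝ := min (α - |v i|) (|v j|) with htp
        set tm : ℝ := min (|v i|) (α - |v j|) with htm
        have htppos : 0 < tp := lt_min (by linarith) (abs_pos.mpr hvj)
        have htmpos : 0 < tm := lt_min (abs_pos.mpr hvi) (by linarith)
        -- generic facts about wv t for suitable t
        have key : ∀ t : ℝ, -|v i| ≤ t → t ≤ |v j| → t ≤ α - |v i| → -t ≤ α - |v j| →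
            (|wv t i| = |v i| + t) ∧ (|wv t j| = |v j| - t) ∧
            (∀ l, l ≠ i → l ≠ j → wv t l = v l) ∧
            (∀ l, |wv t l| ≤ α) ∧ (∑ l, |wv t l| = ∑ l, |v l|) ∧
            (∀ l, wv t l ≠ 0 → v l ≠ 0) := by
          intro t h1t h2t h3t h4t
          have hwi : wv t i = σi * (|v i| + t) := by
            have h0 : wv t i = v i + t * σi := by simp [hwv, hd]
            rw [h0]; linear_combination hσi
          have hwj : wv t j = σj * (|v j| - t) := by
            have h0 : wv t j = v j + t * (-σj) := by simp [hwv, hd, Ne.symm hij]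
            rw [h0]; linear_combination hσj
          have hwl : ∀ l, l ≠ i → l ≠ j → wv t l = v l := by
            intro l hl1 hl2; simp [hwv, hd, hl1, hl2]
          have habsi : |wv t i| = |v i| + t := by
            rw [hwi, abs_mul, hσiabs, one_mul, abs_of_nonneg (by linarith)]
          have habsj : |wv t j| = |v j| - t := by
            rw [hwj, abs_mul, hσjabs, one_mul, abs_of_nonneg (by linarith)]
          refine ⟨habsi, habsj, hwl, ?_, ?_, ?_⟩
          · intro l
            by_cases hl1 : l = i
            · subst hl1; rw [habsi]; linarith
            by_cases hl2 : l = j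
            · subst hl2; rw [habsj]; linarith
            · rw [hwl l hl1 hl2]; exact hinf l
          · have hsplit : ∀ f : Fin n → ℝ, ∑ l, f l = f i + (f j + ∑ l ∈ (univ.erase i).erase j, f l) := by
              intro f
              rw [← Finset.add_sum_erase _ f (mem_univ i),
                  ← Finset.add_sum_erase _ f (mem_erase.mpr ⟨Ne.symm hij, mem_univ j⟩)]
            rw [hsplit (fun l => |wv t l|), hsplit (fun l => |v l|)]
            have : ∑ l ∈ (univ.erase i).erase j, |wv t l| = ∑ l ∈ (univ.erase i).erase j, |v l| := by
              refine Finset.sum_congr rfl (fun l hl => ?_)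
              simp only [mem_erase] at hl
              rw [hwl l hl.2.1 hl.1]
            rw [this, habsi, habsj]; ring
          · intro l
            by_cases hl1 : l = i
            · subst hl1; intro _; exact hvi
            by_cases hl2 : l = j
            · subst hl2; intro _; exact hvj
            · rw [hwl l hl1 hl2]; exact id
        have keyp := key tp (by have := abs_nonneg (v i); linarith) (min_le_right _ _)
          (min_le_left _ _)
          (by have h : tp ≤ |v j| := min_le_right _ _; linarith)
        have keym := key (-tm) (neg_le_neg (min_le_left (|v i|) (α - |v j|)))
          (by have := abs_nonneg (v j); linarith) (by linarith)
          (by have h : tm ≤ α - |v j| := min_le_right _ _; linarith)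
        obtain ⟨hpi, hpj, hpl, hpinf, hpsum, hpsupp⟩ := keyp
        obtain ⟨hmi, hmj, hml, hminf, hmsum, hmsupp⟩ := keym
        -- fractional sets shrink strictly
        have hfsub : ∀ t, (∀ l, wv t l ≠ 0 → v l ≠ 0) →
            (univ.filter (fun l => wv t l ≠ 0 ∧ |wv t l| < α)) ⊆
            (univ.filter (fun l => v l ≠ 0 ∧ |v l| < α)) := by
          intro t hsupp l hl
          simp only [mem_filter, mem_univ, true_and] at hl ⊢
          by_cases hl1 : l = i
          · subst hl1; exact ⟨hvi, hvia⟩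
          by_cases hl2 : l = j
          · subst hl2; exact ⟨hvj, hvja⟩
          · have heq : wv t l = v l := by simp [hwv, hd, hl1, hl2]
            rw [heq] at hl
            exact hl
        have hcardp : (univ.filter (fun l => wv tp l ≠ 0 ∧ |wv tp l| < α)).card ≤ N := by
          have hss : (univ.filter (fun l => wv tp l ≠ 0 ∧ |wv tp l| < α)) ⊂
              (univ.filter (fun l => v l ≠ 0 ∧ |v l| < α)) := by
            refine Finset.ssubset_iff_of_subset (hfsub tp hpsupp) |>.mpr ?_
            rcases min_cases (α - |v i|) (|v j|) with ⟨he, _⟩ | ⟨he, _⟩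
            · refine ⟨i, by simp [hvi, hvia], ?_⟩
              simp only [mem_filter, mem_univ, true_and, not_and, not_lt]
              intro _
              rw [hpi, htp, he]; linarith
            · refine ⟨j, by simp [hvj, hvja], ?_⟩
              simp only [mem_filter, mem_univ, true_and, not_and, not_lt]
              intro hne
              exfalso
              apply hne
              have h0 : |wv tp j| = 0 := by rw [hpj, htp, he]; ring
              exact abs_eq_zero.mp h0
          have := Finset.card_lt_card hss
          omega
        have hcardm : (univ.filter (fun l => wv (-tm) l ≠ 0 ∧ |wv (-tm) l| < α)).card ≤ N := by
          have hss : (univ.filter (fun l => wv (-tm) l ≠ 0 ∧ |wv (-tm) l| < α)) ⊂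
              (univ.filter (fun l => v l ≠ 0 ∧ |v l| < α)) := by
            refine Finset.ssubset_iff_of_subset (hfsub _ hmsupp) |>.mpr ?_
            rcases min_cases (|v i|) (α - |v j|) with ⟨he, _⟩ | ⟨he, _⟩
            · refine ⟨i, by simp [hvi, hvia], ?_⟩
              simp only [mem_filter, mem_univ, true_and, not_and, not_lt]
              intro hne
              exfalso
              apply hne
              have h0 : |wv (-tm) i| = 0 := by rw [hmi, htm, he]; ring
              exact abs_eq_zero.mp h0
            · refine ⟨j, by simp [hvj, hvja], ?_⟩
              simp only [mem_filter, mem_univ, true_and, not_and, not_lt]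
              intro _
              rw [hmj, htm, he]; linarith
          have := Finset.card_lt_card hss
          omega
        -- apply IH to the endpoints
        have hp1 : (∑ l, |wv tp l|) ≤ k * α := by rw [hpsum]; exact h1
        have hm1 : (∑ l, |wv (-tm) l|) ≤ k * α := by rw [hmsum]; exact h1
        have memp := ih (wv tp) hcardp hpinf hp1
        have memm := ih (wv (-tm)) hcardm hminf hm1
        -- transfer to the hull relative to v
        have hmono : ∀ t, (∀ l, wv t l ≠ 0 → v l ≠ 0) →
            {u : Fin n → ℝ | (∀ l, u l ≠ 0 → wv t l ≠ 0) ∧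
              ((univ.filter (fun l => u l ≠ 0)).card ≤ k) ∧
              (∀ l, |u l| ≤ α) ∧ (∑ l, |u l|) ≤ k * α} ⊆
            {u : Fin n → ℝ | (∀ l, u l ≠ 0 → v l ≠ 0) ∧
              ((univ.filter (fun l => u l ≠ 0)).card ≤ k) ∧
              (∀ l, |u l| ≤ α) ∧ (∑ l, |u l|) ≤ k * α} := by
          intro t hsupp u hu
          exact ⟨fun l h => hsupp l (hu.1 l h), hu.2.1, hu.2.2.1, hu.2.2.2⟩
        have memp' := convexHull_mono (hmono tp hpsupp) memp
        have memm' := convexHull_mono (hmono _ hmsupp) memm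
        -- v is a convex combination of the endpoints
        have hsum : tp + tm > 0 := by linarith
        have hcomb : v = (tm / (tp + tm)) • wv tp + (tp / (tp + tm)) • wv (-tm) := by
          funext l
          simp only [Pi.add_apply, Pi.smul_apply, smul_eq_mul, hwv]
          field_simp
          ring
        have hfin := (convex_convexHull ℝ _) memp' memm'
          (le_of_lt (div_pos htmpos hsum)) (le_of_lt (div_pos htppos hsum))
          (by rw [← add_div, add_comm, div_self (ne_of_gt hsum)])
        rwa [← hcomb] at hfin
  intro v h1 h2
  exact main _ v le_rfl h1 h2

set_option maxHeartbeats 2000000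

/-- If δ_{2k} < 1/√2, then every k-sparse x is the unique ℓ1 minimizer subject to
Φz = Φx. -/
theorem basis_pursuit_recovery {m n : ℕ} (Φ : Matrix (Fin m) (Fin n) ℝ)
    (hcols : ∀ j, ∑ i, Φ i j ^ 2 = 1) (k : ℕ)
    (hδ : ric Φ (2 * k) < 1 / Real.sqrt 2)
    (x : Fin n → ℝ) (hx : IsSparse k x) :
    ∀ z : Fin n → ℝ, Φ.mulVec z = Φ.mulVec x → z ≠ x →
      ∑ j, |x j| < ∑ j, |z j| := by
  intro z hΦz hzx
  obtain ⟨δ, hδ0, hδlt, hRIP⟩ := ric_lt_elim Φ (2 * k) hδ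
  set s2 : ℝ := Real.sqrt 2 with hs2def
  have hs2 : s2 ^ 2 = 2 := Real.sq_sqrt (by norm_num)
  have hs2pos : 0 < s2 := Real.sqrt_pos.mpr (by norm_num)
  have hs21 : 1 < s2 := by nlinarith
  set μ : ℝ := s2 - 1 with hμdef
  set h : Fin n → ℝ := fun j => z j - x j with hhdef
  have hzxh : ∀ j, z j = x j + h j := fun j => by simp [hhdef]
  have hker : ∀ r, (∑ j, Φ r j * h j) = 0 := by
    intro r
    have hcf := congrFun hΦz r
    simp only [Matrix.mulVec, dotProduct] at hcf
    simp only [hhdef, mul_sub]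
    rw [Finset.sum_sub_distrib, hcf]
    ring
  have hhne : ∃ j, h j ≠ 0 := by
    by_contra hc
    push_neg at hc
    exact hzx (funext fun j => by
      have := hc j
      simp only [hhdef, sub_eq_zero] at this
      exact this)
  obtain ⟨s, hscard, hsz⟩ := hx
  -- reduce to the null space property
  suffices hNSP : ∑ j ∈ s, |h j| < ∑ j ∈ sᶜ, |h j| by
    have e1 : ∑ j, |x j| = ∑ j ∈ s, |x j| := by
      rw [← Finset.sum_add_sum_compl s]
      have hz0 : ∑ j ∈ sᶜ, |x j| = 0 :=
        Finset.sum_eq_zero fun j hj => by rw [hsz j (Finset.mem_compl.mp hj)]; simp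
      rw [hz0, add_zero]
    have e2 : ∑ j, |z j| = ∑ j ∈ s, |z j| + ∑ j ∈ sᶜ, |h j| := by
      rw [← Finset.sum_add_sum_compl s]
      congr 1
      refine Finset.sum_congr rfl fun j hj => ?_
      rw [hzxh j, hsz j (Finset.mem_compl.mp hj), zero_add]
    have e3 : ∑ j ∈ s, |x j| ≤ ∑ j ∈ s, |z j| + ∑ j ∈ s, |h j| := by
      rw [← Finset.sum_add_distrib]
      refine Finset.sum_le_sum fun j _ => ?_
      calc |x j| = |z j - h j| := by rw [hzxh j]; ring_nf
        _ ≤ |z j| + |h j| := abs_sub _ _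
    rw [e1, e2]
    linarith
  by_contra hcon
  push_neg at hcon
  -- case n ≤ 2k : the kernel vector h is 2k-sparse, hence zero
  rcases le_or_gt n (2 * k) with hn2k | hn2k
  · have hsp : IsSparse (2 * k) h :=
      ⟨univ, by simpa using hn2k, fun j hj => absurd (mem_univ j) hj⟩
    have hlow := (hRIP h hsp).1
    have hM0 : (∑ r, (∑ j, Φ r j * h j) ^ 2) = 0 :=
      Finset.sum_eq_zero fun r _ => by rw [hker r]; ring
    rw [hM0] at hlow
    have hδ1 : δ < 1 := lt_trans hδlt (by rw [div_lt_one hs2pos]; exact hs21)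
    obtain ⟨j₀, hj₀⟩ := hhne
    have hsq : 0 < h j₀ ^ 2 := by rcases hj₀.lt_or_gt with hl | hl <;> nlinarith
    have hsum : h j₀ ^ 2 ≤ ∑ j, h j ^ 2 :=
      Finset.single_le_sum (fun j _ => sq_nonneg (h j)) (mem_univ j₀)
    nlinarith
  -- case k = 0
  rcases Nat.eq_zero_or_pos k with hk0 | hk1
  · subst hk0
    have hse : s = ∅ := Finset.card_eq_zero.mp (le_antisymm (by simpa using hscard) (Nat.zero_le _))
    rw [hse] at hcon
    simp only [Finset.compl_empty, Finset.sum_empty] at hcon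
    obtain ⟨j₀, hj₀⟩ := hhne
    have h1 : 0 < ∑ j, |h j| :=
      Finset.sum_pos' (fun j _ => abs_nonneg _) ⟨j₀, mem_univ _, abs_pos.mpr hj₀⟩
    linarith
  -- main case: 1 ≤ k, 2k < n
  have hkn : k ≤ n := by omega
  obtain ⟨T, hTcard, hTdom, hTmax⟩ := exists_topk h k hkn
  set α : ℝ := (∑ j ∈ T, |h j|) / k with hαdef
  have hkR : (0 : ℝ) < k := by exact_mod_cast hk1
  have hkα : (k : ℝ) * α = ∑ j ∈ T, |h j| := by rw [hαdef]; field_simp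
  have hα0 : 0 ≤ α := div_nonneg (Finset.sum_nonneg fun j _ => abs_nonneg _) hkR.le
  set g : Fin n → ℝ := fun j => if j ∈ T then h j else 0 with hgdef
  set v : Fin n → ℝ := fun j => if j ∈ T then 0 else h j with hvdef
  have hgv : ∀ j, g j + v j = h j := fun j => by
    by_cases hj : j ∈ T <;> simp [hgdef, hvdef, hj]
  set P : ℝ := ∑ j, g j ^ 2 with hPdef
  have hPT : P = ∑ j ∈ T, h j ^ 2 := by
    rw [hPdef, ← Finset.sum_add_sum_compl T]
    have h1 : ∑ j ∈ T, g j ^ 2 = ∑ j ∈ T, h j ^ 2 :=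
      Finset.sum_congr rfl fun j hj => by simp [hgdef, hj]
    have h2 : ∑ j ∈ Tᶜ, g j ^ 2 = 0 :=
      Finset.sum_eq_zero fun j hj => by simp [hgdef, Finset.mem_compl.mp hj]
    rw [h1, h2, add_zero]
  -- |v| is bounded by α entrywise
  have hvinf : ∀ j, |v j| ≤ α := by
    intro j
    by_cases hj : j ∈ T
    · simp [hvdef, hj, hα0]
    · have hle : ∀ i ∈ T, |h j| ≤ |h i| := fun i hi => hTdom i hi j hj
      have hsum : (k : ℝ) * |h j| ≤ ∑ i ∈ T, |h i| := by
        calc (k : ℝ) * |h j| = ∑ _i ∈ T, |h j| := by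
              rw [Finset.sum_const, hTcard, nsmul_eq_mul]
          _ ≤ ∑ i ∈ T, |h i| := Finset.sum_le_sum hle
      have : |v j| = |h j| := by simp [hvdef, hj]
      rw [this, hαdef, le_div_iff₀ hkR]
      linarith
  -- ℓ1 norm of v is at most kα
  have hv1 : (∑ j, |v j|) ≤ k * α := by
    have hveq : ∑ j, |v j| = ∑ j ∈ Tᶜ, |h j| := by
      rw [← Finset.sum_add_sum_compl T]
      have h1 : ∑ j ∈ T, |v j| = 0 := Finset.sum_eq_zero fun j hj => by simp [hvdef, hj]
      have h2 : ∑ j ∈ Tᶜ, |v j| = ∑ j ∈ Tᶜ, |h j| :=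
        Finset.sum_congr rfl fun j hj => by simp [hvdef, Finset.mem_compl.mp hj]
      rw [h1, h2, zero_add]
    have hTtot := Finset.sum_add_sum_compl T (fun j => |h j|)
    have hstot := Finset.sum_add_sum_compl s (fun j => |h j|)
    have hsT := hTmax s hscard
    rw [hveq, hkα]
    linarith
  -- P is positive
  have hP : 0 < P := by
    rcases (Finset.sum_nonneg (fun j (_ : j ∈ (univ : Finset (Fin n))) =>
      sq_nonneg (g j))).lt_or_eq with hlt | heq
    · rwa [hPdef]
    · exfalso
      have hz : ∀ j ∈ (univ : Finset (Fin n)), g j ^ 2 = 0 := by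
        intro j hj
        have := (Finset.sum_eq_zero_iff_of_nonneg
          (fun j _ => sq_nonneg (g j))).mp heq.symm
        exact this j hj
      have hgz : ∀ j, g j = 0 := fun j => by
        have := hz j (mem_univ j); exact pow_eq_zero_iff (by norm_num) |>.mp this
      have hTne : T.Nonempty := Finset.card_pos.mp (by omega)
      obtain ⟨i₀, hi₀⟩ := hTne
      have hhi₀ : h i₀ = 0 := by have := hgz i₀; simpa [hgdef, hi₀] using this
      obtain ⟨j₀, hj₀⟩ := hhne
      by_cases hjT : j₀ ∈ T
      · exact hj₀ (by have := hgz j₀; simpa [hgdef, hjT] using this)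
      · have := hTdom i₀ hi₀ j₀ hjT
        rw [hhi₀] at this
        simp only [abs_zero] at this
        exact hj₀ (abs_eq_zero.mp (le_antisymm this (abs_nonneg _)))
  -- kα² ≤ P  (Cauchy–Schwarz)
  have hkα2 : (k : ℝ) * α ^ 2 ≤ P := by
    have hCS := Finset.sum_mul_sq_le_sq_mul_sq T (fun _ => (1 : ℝ)) (fun j => |h j|)
    simp only [one_pow, one_mul, Finset.sum_const, hTcard, nsmul_eq_mul, sq_abs] at hCS
    rw [hPT]
    have hCS' : (∑ j ∈ T, |h j|) ^ 2 ≤ (k : ℝ) * ∑ j ∈ T, h j ^ 2 := by simpa using hCS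
    have h2 : ((k:ℝ) * α) ^ 2 ≤ (k:ℝ) * ∑ j ∈ T, h j ^ 2 := by rw [hkα]; exact hCS'
    nlinarith [h2, hkR]
  -- decompose v as a convex combination of k-sparse vectors
  have hdec := polytope_decomp k α v hvinf hv1
  rw [_root_.convexHull_eq] at hdec
  obtain ⟨ι, t, w, u, hw0, hw1, hmem, hcm⟩ := hdec
  have hv_eq : ∀ j, v j = ∑ i ∈ t, w i * u i j := by
    have hv' : v = ∑ i ∈ t, w i • u i := by
      rw [← hcm, Finset.centerMass_eq_of_sum_1 _ _ hw1]
    intro j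
    rw [hv']
    simp [Finset.sum_apply]
  set X : Fin m → ℝ := fun r => ∑ j, Φ r j * g j with hXdef
  set A : ℝ := ∑ r, X r ^ 2 with hAdef
  have hA0 : 0 ≤ A := Finset.sum_nonneg fun r _ => sq_nonneg _
  have hlin : ∀ (r : Fin m) (a b : ℝ) (y y' : Fin n → ℝ),
      (∑ j, Φ r j * (a * y j + b * y' j)) =
        a * (∑ j, Φ r j * y j) + b * (∑ j, Φ r j * y' j) := by
    intro r a b y y'
    rw [Finset.mul_sum, Finset.mul_sum, ← Finset.sum_add_distrib]
    exact Finset.sum_congr rfl fun j _ => by ring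
  have hXV : ∀ r, (∑ j, Φ r j * v j) = -X r := by
    intro r
    have h1 : X r + (∑ j, Φ r j * v j) = 0 := by
      rw [hXdef]
      rw [← Finset.sum_add_distrib]
      rw [show (∑ j, (Φ r j * g j + Φ r j * v j)) = ∑ j, Φ r j * h j from
        Finset.sum_congr rfl fun j _ => by rw [← hgv j]; ring]
      exact hker r
    linarith
  have hYv : ∀ r, (∑ j, Φ r j * v j) = ∑ i ∈ t, w i * (∑ j, Φ r j * u i j) := by
    intro r
    calc (∑ j, Φ r j * v j) = ∑ j, ∑ i ∈ t, Φ r j * (w i * u i j) := by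
          refine Finset.sum_congr rfl fun j _ => ?_
          rw [hv_eq j, Finset.mul_sum]
      _ = ∑ i ∈ t, ∑ j, Φ r j * (w i * u i j) := Finset.sum_comm
      _ = ∑ i ∈ t, w i * (∑ j, Φ r j * u i j) := by
          refine Finset.sum_congr rfl fun i _ => ?_
          rw [Finset.mul_sum]
          exact Finset.sum_congr rfl fun j _ => by ring
  -- per-index data
  set Bq : ι → ℝ := fun i => ∑ r, X r * (∑ j, Φ r j * u i j) with hBqdef
  set Mq : ι → ℝ := fun i => ∑ r, (∑ j, Φ r j * u i j) ^ 2 with hMqdef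
  set Qq : ι → ℝ := fun i => ∑ j, u i j ^ 2 with hQqdef
  have hsparse : ∀ i ∈ t, ∀ a b : ℝ, IsSparse (2 * k) (fun j => a * g j + b * u i j) := by
    intro i hi a b
    obtain ⟨husupp, hucard, huinf, hu1⟩ := hmem i hi
    refine ⟨T ∪ univ.filter (fun j => u i j ≠ 0), ?_, ?_⟩
    · calc (T ∪ univ.filter (fun j => u i j ≠ 0)).card
          ≤ T.card + (univ.filter (fun j => u i j ≠ 0)).card := Finset.card_union_le _ _
        _ ≤ k + k := by
            have := hucard
            omega
        _ = 2 * k := by ring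
    · intro j hj
      rw [Finset.mem_union] at hj
      push_neg at hj
      have hg0 : g j = 0 := by simp [hgdef, hj.1]
      have hu0 : u i j = 0 := by
        by_contra hc
        exact hj.2 (Finset.mem_filter.mpr ⟨mem_univ _, hc⟩)
      simp [hg0, hu0]
  have hgu : ∀ i ∈ t, ∀ j, g j * u i j = 0 := by
    intro i hi j
    obtain ⟨husupp, _, _, _⟩ := hmem i hi
    by_cases hj : u i j = 0
    · simp [hj]
    · have hvj := husupp j hj
      have hjT : j ∉ T := by
        intro hT
        exact hvj (by simp [hvdef, hT])
      simp [hgdef, hjT]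
  have hNdisj : ∀ i ∈ t, ∀ a b : ℝ,
      (∑ j, (a * g j + b * u i j) ^ 2) = a ^ 2 * P + b ^ 2 * Qq i := by
    intro i hi a b
    calc (∑ j, (a * g j + b * u i j) ^ 2)
        = ∑ j, (a ^ 2 * g j ^ 2 + b ^ 2 * u i j ^ 2) := by
          refine Finset.sum_congr rfl fun j _ => ?_
          linear_combination (2 * a * b) * (hgu i hi j)
      _ = a ^ 2 * P + b ^ 2 * Qq i := by
          rw [Finset.sum_add_distrib, ← Finset.mul_sum, ← Finset.mul_sum]
  have hMexp : ∀ (a b : ℝ) (u' : Fin n → ℝ),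
      (∑ r, (∑ j, Φ r j * (a * g j + b * u' j)) ^ 2) =
        a ^ 2 * A + 2 * a * b * (∑ r, X r * (∑ j, Φ r j * u' j)) +
          b ^ 2 * (∑ r, (∑ j, Φ r j * u' j) ^ 2) := by
    intro a b u'
    calc (∑ r, (∑ j, Φ r j * (a * g j + b * u' j)) ^ 2)
        = ∑ r, (a ^ 2 * X r ^ 2 + 2 * a * b * (X r * (∑ j, Φ r j * u' j)) +
            b ^ 2 * (∑ j, Φ r j * u' j) ^ 2) := by
          refine Finset.sum_congr rfl fun r _ => ?_
          rw [hlin r a b g u', hXdef]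
          ring
      _ = _ := by
          rw [Finset.sum_add_distrib, Finset.sum_add_distrib,
            ← Finset.mul_sum, ← Finset.mul_sum, ← Finset.mul_sum, hAdef]
  -- the two RIP inequalities, per index
  have hlowi : ∀ i ∈ t, (1 - δ) * (P + μ ^ 2 * Qq i) ≤
      A + 2 * μ * Bq i + μ ^ 2 * Mq i := by
    intro i hi
    have h1 := (hRIP _ (hsparse i hi 1 μ)).1
    rw [hNdisj i hi 1 μ, hMexp 1 μ (u i)] at h1
    have e1 : (1:ℝ) ^ 2 * P + μ ^ 2 * Qq i = P + μ ^ 2 * Qq i := by ring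
    have e2 : (1:ℝ) ^ 2 * A + 2 * 1 * μ * Bq i + μ ^ 2 * Mq i
        = A + 2 * μ * Bq i + μ ^ 2 * Mq i := by ring
    rw [e1, e2] at h1
    exact h1
  have hupi : ∀ i ∈ t, μ ^ 2 * A - 2 * μ * Bq i + Mq i ≤
      (1 + δ) * (μ ^ 2 * P + Qq i) := by
    intro i hi
    have h1 := (hRIP _ (hsparse i hi (-μ) 1)).2
    rw [hNdisj i hi (-μ) 1, hMexp (-μ) 1 (u i)] at h1
    have e1 : (-μ) ^ 2 * A + 2 * (-μ) * 1 * Bq i + 1 ^ 2 * Mq i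
        = μ ^ 2 * A - 2 * μ * Bq i + Mq i := by ring
    have e2 : (-μ) ^ 2 * P + 1 ^ 2 * Qq i = μ ^ 2 * P + Qq i := by ring
    rw [e1, e2] at h1
    exact h1
  -- aggregate with the weights
  set Q : ℝ := ∑ i ∈ t, w i * Qq i with hQdef
  set MB : ℝ := ∑ i ∈ t, w i * Mq i with hMBdef
  have hBB : ∑ i ∈ t, w i * Bq i = -A := by
    calc (∑ i ∈ t, w i * Bq i)
        = ∑ i ∈ t, ∑ r, X r * (w i * (∑ j, Φ r j * u i j)) := by
          refine Finset.sum_congr rfl fun i _ => ?_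
          rw [hBqdef, Finset.mul_sum]
          exact Finset.sum_congr rfl fun r _ => by ring
      _ = ∑ r, ∑ i ∈ t, X r * (w i * (∑ j, Φ r j * u i j)) := Finset.sum_comm
      _ = ∑ r, X r * (∑ j, Φ r j * v j) := by
          refine Finset.sum_congr rfl fun r _ => ?_
          rw [hYv r, Finset.mul_sum]
      _ = ∑ r, -(X r ^ 2) := by
          refine Finset.sum_congr rfl fun r _ => ?_
          rw [hXV r]
          ring
      _ = -A := by rw [Finset.sum_neg_distrib, hAdef]
  have hwsum : ∀ (c1 c2 : ℝ) (f : ι → ℝ), ∑ i ∈ t, w i * (c1 + c2 * f i) =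
      c1 * (∑ i ∈ t, w i) + c2 * (∑ i ∈ t, w i * f i) := by
    intro c1 c2 f
    rw [Finset.mul_sum, Finset.mul_sum, ← Finset.sum_add_distrib]
    exact Finset.sum_congr rfl fun i _ => by ring
  have hwsum3 : ∀ (c1 c2 c3 : ℝ) (f f' : ι → ℝ),
      ∑ i ∈ t, w i * (c1 + c2 * f i + c3 * f' i) =
      c1 * (∑ i ∈ t, w i) + c2 * (∑ i ∈ t, w i * f i) + c3 * (∑ i ∈ t, w i * f' i) := by
    intro c1 c2 c3 f f'
    rw [Finset.mul_sum, Finset.mul_sum, Finset.mul_sum,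
      ← Finset.sum_add_distrib, ← Finset.sum_add_distrib]
    exact Finset.sum_congr rfl fun i _ => by ring
  have hS1 : (1 - δ) * (P + μ ^ 2 * Q) ≤ (1 - 2 * μ) * A + μ ^ 2 * MB := by
    have hsum1 : ∑ i ∈ t, w i * ((1 - δ) * (P + μ ^ 2 * Qq i)) ≤
        ∑ i ∈ t, w i * (A + 2 * μ * Bq i + μ ^ 2 * Mq i) :=
      Finset.sum_le_sum fun i hi => mul_le_mul_of_nonneg_left (hlowi i hi) (hw0 i hi)
    have l1 : ∑ i ∈ t, w i * ((1 - δ) * (P + μ ^ 2 * Qq i)) =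
        ∑ i ∈ t, w i * ((1 - δ) * P + (1 - δ) * μ ^ 2 * Qq i) :=
      Finset.sum_congr rfl fun i _ => by ring
    have l2 : ∑ i ∈ t, w i * (A + 2 * μ * Bq i + μ ^ 2 * Mq i) =
        ∑ i ∈ t, w i * (A + (2 * μ) * Bq i + (μ ^ 2) * Mq i) :=
      Finset.sum_congr rfl fun i _ => by ring
    rw [l1, hwsum ((1 - δ) * P) ((1 - δ) * μ ^ 2) Qq, l2,
      hwsum3 A (2 * μ) (μ ^ 2) Bq Mq, hw1, hBB, ← hQdef, ← hMBdef] at hsum1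
    linarith
  have hS2 : μ ^ 2 * A + 2 * μ * A + MB ≤ (1 + δ) * (μ ^ 2 * P + Q) := by
    have hsum2 : ∑ i ∈ t, w i * (μ ^ 2 * A - 2 * μ * Bq i + Mq i) ≤
        ∑ i ∈ t, w i * ((1 + δ) * (μ ^ 2 * P + Qq i)) :=
      Finset.sum_le_sum fun i hi => mul_le_mul_of_nonneg_left (hupi i hi) (hw0 i hi)
    have l1 : ∑ i ∈ t, w i * (μ ^ 2 * A - 2 * μ * Bq i + Mq i) =
        ∑ i ∈ t, w i * (μ ^ 2 * A + (-(2 * μ)) * Bq i + (1 : ℝ) * Mq i) :=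
      Finset.sum_congr rfl fun i _ => by ring
    have l2 : ∑ i ∈ t, w i * ((1 + δ) * (μ ^ 2 * P + Qq i)) =
        ∑ i ∈ t, w i * ((1 + δ) * (μ ^ 2 * P) + (1 + δ) * Qq i) :=
      Finset.sum_congr rfl fun i _ => by ring
    rw [l1, hwsum3 (μ ^ 2 * A) (-(2 * μ)) 1 Bq Mq, l2,
      hwsum ((1 + δ) * (μ ^ 2 * P)) (1 + δ) Qq, hw1, hBB, ← hQdef, ← hMBdef] at hsum2
    linarith
  -- Q ≤ P
  have hQP : Q ≤ P := by
    have hQle : ∀ i ∈ t, w i * Qq i ≤ w i * P := by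
      intro i hi
      obtain ⟨husupp, hucard, huinf, hu1⟩ := hmem i hi
      have hQi : Qq i ≤ (k : ℝ) * α ^ 2 := by
        have h1 : (∑ j, u i j ^ 2) ≤ ∑ j, α * |u i j| := by
          refine Finset.sum_le_sum fun j _ => ?_
          nlinarith [huinf j, abs_nonneg (u i j), sq_abs (u i j)]
        have h2 : (∑ j, α * |u i j|) = α * ∑ j, |u i j| := by rw [Finset.mul_sum]
        have h3 : α * (∑ j, |u i j|) ≤ α * ((k : ℝ) * α) :=
          mul_le_mul_of_nonneg_left hu1 hα0
        rw [hQqdef]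
        calc (∑ j, u i j ^ 2) ≤ α * ∑ j, |u i j| := by rw [← h2]; exact h1
          _ ≤ α * ((k : ℝ) * α) := h3
          _ = (k : ℝ) * α ^ 2 := by ring
      exact mul_le_mul_of_nonneg_left (le_trans hQi hkα2) (hw0 i hi)
    calc Q ≤ ∑ i ∈ t, w i * P := Finset.sum_le_sum hQle
      _ = P := by rw [← Finset.sum_mul, hw1, one_mul]
  -- final algebra: contradiction with δ < 1/√2
  have hδs : δ * s2 < 1 := (lt_div_iff₀ hs2pos).mp hδlt
  have hcoeff : (1 - 2 * μ) - μ ^ 4 - 2 * μ ^ 3 = 0 := by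
    rw [hμdef]
    linear_combination (-(s2 ^ 2 - 2 * s2 + 2)) * hs2
  have hS2' : μ ^ 2 * (μ ^ 2 * A + 2 * μ * A + MB) ≤
      μ ^ 2 * ((1 + δ) * (μ ^ 2 * P + Q)) := mul_le_mul_of_nonneg_left hS2 (sq_nonneg μ)
  have hAz : ((1 - 2 * μ) - μ ^ 4 - 2 * μ ^ 3) * A = 0 := by rw [hcoeff, zero_mul]
  have hkey : (1 - δ) * (P + μ ^ 2 * Q) ≤ μ ^ 2 * (1 + δ) * (μ ^ 2 * P + Q) := by
    nlinarith [hS1, hS2', hAz]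
  have hμ2 : μ ^ 2 = 3 - 2 * s2 := by rw [hμdef]; linear_combination hs2
  rw [hμ2] at hkey
  have h3s : 0 < 3 - 2 * s2 := by nlinarith
  have e1 : s2 ^ 2 * P = 2 * P := by rw [hs2]
  have e2 : s2 ^ 2 * (δ * P) = 2 * (δ * P) := by rw [hs2]
  have step1 : (1 - δ) * P ≤ (17 - 12 * s2) * (1 + δ) * P + 2 * δ * (3 - 2 * s2) * P := by
    nlinarith [hkey, e1, e2, mul_nonneg (mul_nonneg hδ0 (sub_nonneg.mpr hQP)) h3s.le]
  have hstep : 12 * s2 - 16 ≤ 8 * δ * (3 - 2 * s2) := by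
    nlinarith [step1, hP]
  have hδge : s2 ≤ 2 * δ := by
    nlinarith [hstep, h3s, hs2]
  nlinarith [hδge, hδs, hs2, hs2pos]
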